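/- Let M be a matroid with fundamental pattern X, and suppose M' is a matroid on a ground set indexed by the hyperplanes of M with r(M') = r(M), such that for each element p of the ground set of M, the set of hyperplanes of M containing p is a flat of M'. Then the map sending each flat F of M to the set of hyperplanes of M containing F is an injective, inclusion-reversing map from the flats of M to the flats of M', restricting to a bijection from hyperplanes of M to singletons (points) of M'. -/

import Mathlib

open Set

variable {α β : Type*}

/-- The rank of a matroid: the (common) cardinality of its bases. -/
noncomputable def Matroid.mrk (M : Matroid α) : ℕ := sSup (Set.ncard '' {B | M.IsBase B})

/-- A hyperplane of a matroid: a maximal proper flat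
(equivalently, a flat of rank `r(M) - 1`). -/
def Matroid.IsHyperplane (M : Matroid α) (H : Set α) : Prop :=
  M.IsFlat H ∧ H ≠ M.E ∧ ∀ F, M.IsFlat F → H ⊆ F → F = H ∨ F = M.E

/-- A circuit of a matroid: a minimal dependent set. -/
def Matroid.IsCircuit' (M : Matroid α) (Ct : Set α) : Prop :=
  Ct ⊆ M.E ∧ ¬ M.Indep Ct ∧ ∀ D, D ⊂ Ct → M.Indep D

/-- A point of a matroid: a rank-one flat, i.e. the closure of a nonloop. -/
def Matroid.IsPoint (M : Matroid α) (P : Set α) : Prop :=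
  M.IsFlat P ∧ ∃ e, e ∉ M.closure ∅ ∧ P = M.closure {e}

/-- The closure of any set is a flat. -/
lemma Matroid.closure_flat' (M : Matroid α) (X : Set α) : M.IsFlat (M.closure X) := by
  rw [M.closure_eq_subtypeClosure X]
  exact Matroid.isClosed_iff_isFlat.mp (M.subtypeClosure.isClosed_closure _)

/-- Separation lemma: in a finite matroid, given a flat `F` and a point
`p ∈ M.E \ F`, there is a hyperplane containing `F` avoiding `p`. -/
lemma exists_isHyperplane_sep (M : Matroid α) [M.Finite] {F : Set α} {p : α}
    (hF : M.IsFlat F) (hp : p ∈ M.E) (hpF : p ∉ F) :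
    ∃ H, M.IsHyperplane H ∧ F ⊆ H ∧ p ∉ H := by
  set S : Set (Set α) := {G | M.IsFlat G ∧ F ⊆ G ∧ p ∉ G} with hS
  have hSfin : S.Finite := by
    have hsub : S ⊆ 𝒫 M.E := fun G hG => hG.1.subset_ground
    exact (M.ground_finite.finite_subsets).subset hsub
  obtain ⟨H, hHS, hmax⟩ :=
    Set.Finite.exists_maximalFor id S hSfin ⟨F, hF, Subset.rfl, hpF⟩
  obtain ⟨hHflat, hFH, hpH⟩ := hHS
  -- every flat strictly containing H contains p
  have step1 : ∀ G, M.IsFlat G → H ⊆ G → G ≠ H → p ∈ G := by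
    intro G hG hHG hne
    by_contra hpG
    exact hne ((hmax ⟨hG, hFH.trans hHG, hpG⟩ hHG).antisymm hHG)
  have hHE : H ⊆ M.E := hHflat.subset_ground
  -- the closure of `H ∪ {p}` is everything
  have step2 : M.closure (insert p H) = M.E := by
    refine (M.closure_subset_ground _).antisymm fun r hr => ?_
    by_contra hrK
    have hrH : r ∉ H := fun h => hrK (M.subset_closure (insert p H)
      (insert_subset hp hHE) (mem_insert_of_mem _ h))
    have hG : M.IsFlat (M.closure (insert r H)) := M.closure_flat' _
    have hHG : H ⊆ M.closure (insert r H) :=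
      (subset_insert _ _).trans (M.subset_closure _ (insert_subset hr hHE))
    have hrG : r ∈ M.closure (insert r H) :=
      M.subset_closure _ (insert_subset hr hHE) (mem_insert _ _)
    have hne : M.closure (insert r H) ≠ H := fun h => hrH (h ▸ hrG)
    have hpG : p ∈ M.closure (insert r H) := step1 _ hG hHG hne
    have hpcl : p ∉ M.closure H := by rwa [hHflat.closure]
    exact hrK (Matroid.mem_closure_insert hpcl hpG)
  refine ⟨H, ⟨hHflat, fun h => hpH (h ▸ hp), fun G hG hHG => ?_⟩, hFH, hpH⟩
  by_cases hne : G = H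
  · exact Or.inl hne
  · right
    have hpG : p ∈ G := step1 G hG hHG hne
    have : M.closure (insert p H) ⊆ G := by
      refine (M.closure_subset_closure (insert_subset hpG hHG)).trans ?_
      rw [hG.closure]
    exact hG.subset_ground.antisymm (step2 ▸ this)

/-- The set of hyperplanes containing a hyperplane `H` is the singleton `{H}`. -/
lemma phi_isHyperplane_eq {M : Matroid α} {H : Set α} (hH : M.IsHyperplane H) :
    {H' : {H : Set α // M.IsHyperplane H} | H ⊆ H'.1} = {⟨H, hH⟩} := by
  ext H'
  simp only [mem_setOf_eq, mem_singleton_iff]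
  constructor
  · intro hsub
    rcases hH.2.2 H'.1 H'.2.1 hsub with h | h
    · exact Subtype.ext h
    · exact absurd h H'.2.2.1
  · rintro rfl; exact Subset.rfl

/-- let `M'` be a matroid on the set of hyperplanes of `M`, of the
same rank as `M`, such that for each point `p` of the ground set the set of
hyperplanes through `p` is a flat of `M'` (i.e. `M' ∈ R(Xᵀ)` for the fundamental
pattern `X` of `M`).  Then `φ(F) = {H : hyperplane of M | F ⊆ H}` is an injective,
inclusion-reversing map from flats of `M` to flats of `M'` restricting to a
bijection from the hyperplanes of `M` onto the points of `M'`. -/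
theorem adjoint_map_of_transpose_class (M : Matroid α) [M.Finite]
    (M' : Matroid {H : Set α // M.IsHyperplane H})
    (hE' : M'.E = Set.univ) (hrk : M'.mrk = M.mrk)
    (hflat : ∀ p ∈ M.E, M'.IsFlat {H : {H : Set α // M.IsHyperplane H} | p ∈ H.1}) :
    (∀ Fl, M.IsFlat Fl →
        M'.IsFlat {H : {H : Set α // M.IsHyperplane H} | Fl ⊆ H.1}) ∧
    Set.InjOn (fun Fl => {H : {H : Set α // M.IsHyperplane H} | Fl ⊆ H.1})
      {Fl | M.IsFlat Fl} ∧
    (∀ F₁ F₂, M.IsFlat F₁ → M.IsFlat F₂ → F₁ ⊆ F₂ →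
        {H : {H : Set α // M.IsHyperplane H} | F₂ ⊆ H.1} ⊆
          {H : {H : Set α // M.IsHyperplane H} | F₁ ⊆ H.1}) ∧
    Set.BijOn (fun Fl => {H : {H : Set α // M.IsHyperplane H} | Fl ⊆ H.1})
      {H | M.IsHyperplane H} {P | M'.IsPoint P} := by
  -- (1) φ sends flats to flats
  have claim1 : ∀ Fl, M.IsFlat Fl →
      M'.IsFlat {H : {H : Set α // M.IsHyperplane H} | Fl ⊆ H.1} := by
    intro Fl hFl
    rcases Fl.eq_empty_or_nonempty with rfl | hne
    · have h : {H : {H : Set α // M.IsHyperplane H} | (∅ : Set α) ⊆ H.1} = M'.E := by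
        rw [hE']; ext H; simp
      rw [h]; exact M'.ground_isFlat
    · have h : {H : {H : Set α // M.IsHyperplane H} | Fl ⊆ H.1}
          = ⋂ p : Fl, {H : {H : Set α // M.IsHyperplane H} | p.1 ∈ H.1} := by
        ext H; simp [Set.subset_def]
      have : Nonempty Fl := hne.to_subtype
      rw [h]
      exact Matroid.IsFlat.iInter (fun p => hflat p.1 (hFl.subset_ground p.2))
  -- (2) injectivity
  have claim2 : Set.InjOn (fun Fl => {H : {H : Set α // M.IsHyperplane H} | Fl ⊆ H.1})
      {Fl | M.IsFlat Fl} := by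
    have key : ∀ F₁ ∈ {Fl | M.IsFlat Fl}, ∀ F₂ ∈ {Fl | M.IsFlat Fl},
        {H : {H : Set α // M.IsHyperplane H} | F₁ ⊆ H.1}
          = {H : {H : Set α // M.IsHyperplane H} | F₂ ⊆ H.1} → F₁ ⊆ F₂ := by
      intro F₁ h₁ F₂ h₂ heq p hp
      by_contra hpF₂
      obtain ⟨H, hH, hFH, hpH⟩ :=
        exists_isHyperplane_sep M h₂ (h₁.subset_ground hp) hpF₂
      have : (⟨H, hH⟩ : {H : Set α // M.IsHyperplane H}) ∈
          {H : {H : Set α // M.IsHyperplane H} | F₁ ⊆ H.1} := by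
        rw [heq]; exact hFH
      exact hpH (this hp)
    intro F₁ h₁ F₂ h₂ heq
    exact (key F₁ h₁ F₂ h₂ heq).antisymm (key F₂ h₂ F₁ h₁ heq.symm)
  -- points of M' are singleton flats
  have hsingleflat : ∀ H : {H : Set α // M.IsHyperplane H}, M'.IsFlat {H} := by
    intro H
    have h := claim1 H.1 H.2.1
    rwa [phi_isHyperplane_eq H.2] at h
  refine ⟨claim1, claim2, fun F₁ F₂ _ _ h₁₂ H hH => h₁₂.trans hH, ?_, ?_, ?_⟩
  · -- MapsTo
    intro H hH
    simp only [mem_setOf_eq] at hH ⊢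
    rw [phi_isHyperplane_eq hH]
    refine ⟨hsingleflat _, ⟨H, hH⟩, ?_, ((hsingleflat ⟨H, hH⟩).closure).symm⟩
    -- ⟨H, hH⟩ is not a loop of M'
    intro hloop
    obtain ⟨p, hpE, hpH⟩ := exists_of_ssubset (hH.1.subset_ground.ssubset_of_ne hH.2.1)
    have hFp := hflat p hpE
    have : (⟨H, hH⟩ : {H : Set α // M.IsHyperplane H}) ∈
        {H : {H : Set α // M.IsHyperplane H} | p ∈ H.1} := by
      have hsub : M'.closure ∅ ⊆ {H : {H : Set α // M.IsHyperplane H} | p ∈ H.1} := by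
        have := M'.closure_subset_closure
          (empty_subset {H : {H : Set α // M.IsHyperplane H} | p ∈ H.1})
        rwa [hFp.closure] at this
      exact hsub hloop
    exact hpH this
  · -- InjOn on hyperplanes
    exact claim2.mono fun H hH => hH.1
  · -- SurjOn onto points
    intro P hP
    obtain ⟨hPflat, e, he0, rfl⟩ := hP
    refine ⟨e.1, e.2, ?_⟩
    have h1 : {H : {H : Set α // M.IsHyperplane H} | e.1 ⊆ H.1} = {e} :=
      phi_isHyperplane_eq e.2
    simp only []
    rw [h1, (hsingleflat e).closure]
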